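/- Consider the game in which a continuum of agents, each with type θ in the probability simplex Γ distributed according to G, simultaneously choose a good i ∈ {1,…,N}; if mass m_i chooses good i, each such agent receives the bundle (s_i/m_i)·e_i (with payoff +∞ if m_i = 0). Suppose an action profile a : Γ → {1,…,N} is a Nash equilibrium with all m_i > 0, i.e., for a.e. θ: θ_{a(θ)}·(s_{a(θ)}/m_{a(θ)}) ≥ θ_j·(s_j/m_j) for all j. Then setting q_j := s_j/m_j and p_j := 1/q_j, the induced allocation x(θ) = q_{a(θ)}·e_{a(θ)} satisfies: x(θ) maximizes θ·z over the budget set {z ∈ ℝ₊^N : p·z ≤ 1} for a.e. θ, and ∫_Γ x dG = s; i.e., (p, x) is a competitive equilibrium with equal incomes. -/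

import Mathlib

open MeasureTheory

/-- Any Nash equilibrium of the lottery-choice game (with all goods demanded by a
positive mass) induces a competitive equilibrium with equal incomes: a.e. type's
bundle maximizes utility on the unit budget set at prices `p j = m j / s j`, and
aggregate demand equals supply. -/
theorem nash_equilibrium_induces_CEEI
    (N : ℕ) (hN : 2 ≤ N)
    (G : Measure (Fin N → ℝ)) [IsProbabilityMeasure G]
    (hGsupp : G (stdSimplex ℝ (Fin N))ᶜ = 0)
    (s : Fin N → ℝ) (hs : ∀ i, 0 < s i)
    (a : (Fin N → ℝ) → Fin N) (ha : Measurable a)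
    (m : Fin N → ℝ) (hm : ∀ i, m i = (G {θ | a θ = i}).toReal)
    (hmpos : ∀ i, 0 < m i)
    (hNash : ∀ᵐ θ ∂G, ∀ j : Fin N,
      θ j * (s j / m j) ≤ θ (a θ) * (s (a θ) / m (a θ)))
    (q p : Fin N → ℝ)
    (hq : ∀ j, q j = s j / m j) (hp : ∀ j, p j = 1 / q j)
    (x : (Fin N → ℝ) → Fin N → ℝ)
    (hx : ∀ θ, x θ = (Pi.single (a θ) (q (a θ)) : Fin N → ℝ)) :
    (∀ j, 0 < p j) ∧
    (∀ᵐ θ ∂G, ∀ z : Fin N → ℝ, (∀ j, 0 ≤ z j) → ∑ j, p j * z j ≤ 1 →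
      ∑ j, θ j * z j ≤ ∑ j, θ j * x θ j) ∧
    (∀ i, ∫ θ, x θ i ∂G = s i) := by
  have hqpos : ∀ j, 0 < q j := fun j => by
    rw [hq]; exact div_pos (hs j) (hmpos j)
  have hppos : ∀ j, 0 < p j := fun j => by
    rw [hp]; exact one_div_pos.mpr (hqpos j)
  refine ⟨hppos, ?_, ?_⟩
  · have hsimp : ∀ᵐ θ ∂G, θ ∈ stdSimplex ℝ (Fin N) := by
      rw [ae_iff]
      exact hGsupp
    filter_upwards [hNash, hsimp] with θ hN hθ z hz hbud
    have hθa : 0 ≤ θ (a θ) * q (a θ) := mul_nonneg (hθ.1 _) (hqpos _).le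
    have key : ∀ j, θ j * z j ≤ θ (a θ) * q (a θ) * (p j * z j) := by
      intro j
      have h1 : θ j * q j ≤ θ (a θ) * q (a θ) := by
        rw [hq, hq]; exact hN j
      have hpq : q j * p j = 1 := by
        rw [hp, mul_one_div, div_self (hqpos j).ne']
      calc θ j * z j = θ j * q j * (p j * z j) := by
            rw [show θ j * q j * (p j * z j) = θ j * z j * (q j * p j) by ring,
              hpq, mul_one]
        _ ≤ θ (a θ) * q (a θ) * (p j * z j) :=
            mul_le_mul_of_nonneg_right h1 (mul_nonneg (hppos j).le (hz j))
    calc ∑ j, θ j * z j ≤ ∑ j, θ (a θ) * q (a θ) * (p j * z j) :=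
          Finset.sum_le_sum fun j _ => key j
      _ = θ (a θ) * q (a θ) * ∑ j, p j * z j := by
          rw [Finset.mul_sum]
      _ ≤ θ (a θ) * q (a θ) * 1 := mul_le_mul_of_nonneg_left hbud hθa
      _ = ∑ j, θ j * x θ j := by
          rw [mul_one, hx]
          rw [Fintype.sum_eq_single (a θ)]
          · simp
          · intro j hj
            simp [Pi.single_eq_of_ne hj]
  · intro i
    have hmeas : MeasurableSet {θ : Fin N → ℝ | a θ = i} :=
      ha (measurableSet_singleton i)
    have heq : (fun θ => x θ i) =
        Set.indicator {θ | a θ = i} (fun _ => q i) := by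
      funext θ
      rw [hx]
      by_cases h : a θ = i
      · rw [h, Pi.single_eq_same]; exact (Set.indicator_of_mem h _).symm
      · rw [Pi.single_eq_of_ne (Ne.symm h)]
        exact (Set.indicator_of_notMem h _).symm
    rw [heq, integral_indicator_const _ hmeas]
    have hGfin : G {θ | a θ = i} ≠ ⊤ := measure_ne_top G _
    have : G.real {θ | a θ = i} = m i := (hm i).symm
    rw [smul_eq_mul, this, hq, mul_comm, div_mul_cancel₀ _ (hmpos i).ne']
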